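/- The Euclidean distance in ℝ⁴ between the segment with endpoints (0,0,0,0) and (1,2,1,2) and the triangle with vertices (2,2,1,0), (0,1,0,2), (0,0,2,1) equals 1/(2√113). -/

import Mathlib

/-- The infimum of Euclidean distances between points of two sets. -/
noncomputable def setDist {E : Type*} [PseudoMetricSpace E] (P Q : Set E) : ℝ :=
  sInf (Set.image2 dist P Q)

namespace Stmt16Aux

noncomputable abbrev E4 := EuclideanSpace ℝ (Fin 4)

noncomputable def pt (a b c d : ℝ) : E4 := (WithLp.equiv 2 (Fin 4 → ℝ)).symm ![a, b, c, d]

lemma inner_pt (a b c d a' b' c' d' : ℝ) :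
    (inner ℝ (pt a b c d) (pt a' b' c' d') : ℝ) = a*a' + b*b' + c*c' + d*d' := by
  simp [pt, PiLp.inner_apply, Fin.sum_univ_four, WithLp.equiv_symm_apply, PiLp.toLp_apply,
    RCLike.inner_apply, starRingEnd_apply]
  ring

lemma pt_apply (a b c d : ℝ) : pt a b c d 0 = a ∧ pt a b c d 1 = b ∧
    pt a b c d 2 = c ∧ pt a b c d 3 = d := by
  refine ⟨?_, ?_, ?_, ?_⟩ <;> simp [pt, WithLp.equiv_symm_apply, PiLp.toLp_apply]

lemma smul_add_pt (s t a b c d a' b' c' d' : ℝ) :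
    s • pt a b c d + t • pt a' b' c' d' =
      pt (s*a+t*a') (s*b+t*b') (s*c+t*c') (s*d+t*d') := by
  ext i
  fin_cases i <;>
    simp [pt, WithLp.equiv_symm_apply, PiLp.toLp_apply]

lemma sqrt113_pos : (0:ℝ) < Real.sqrt 113 := Real.sqrt_pos.mpr (by norm_num)

lemma dist_pq :
    dist (pt (273/452) (273/226) (273/452) (273/226))
      (pt (72/113) (533/452) (135/226) (553/452)) = 1 / (2 * Real.sqrt 113) := by
  have h : dist (pt (273/452) (273/226) (273/452) (273/226))
      (pt (72/113) (533/452) (135/226) (553/452)) = Real.sqrt (1/452) := by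
    rw [EuclideanSpace.dist_eq]
    congr 1
    simp only [pt, WithLp.equiv_symm_apply, PiLp.toLp_apply, Fin.sum_univ_four, Real.dist_eq, sq_abs]
    norm_num [Matrix.cons_val_two, Matrix.cons_val_three, Matrix.vecHead, Matrix.vecTail]
  rw [h]
  rw [show (1:ℝ)/452 = (1/(2*Real.sqrt 113))^2 by
    rw [div_pow, mul_pow, Real.sq_sqrt (by norm_num : (113:ℝ) ≥ 0)]; norm_num]
  exact Real.sqrt_sq (by positivity)

end Stmt16Aux

open Stmt16Aux in
theorem stmt_16 :
    setDist
        (segment ℝ ((WithLp.equiv 2 (Fin 4 → ℝ)).symm ![0, 0, 0, 0])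
          ((WithLp.equiv 2 (Fin 4 → ℝ)).symm ![1, 2, 1, 2]))
        (convexHull ℝ {(WithLp.equiv 2 (Fin 4 → ℝ)).symm ![2, 2, 1, 0],
          (WithLp.equiv 2 (Fin 4 → ℝ)).symm ![0, 1, 0, 2],
          (WithLp.equiv 2 (Fin 4 → ℝ)).symm ![0, 0, 2, 1]}) =
      1 / (2 * Real.sqrt 113) := by
  show setDist (segment ℝ (pt 0 0 0 0) (pt 1 2 1 2))
      (convexHull ℝ {pt 2 2 1 0, pt 0 1 0 2, pt 0 0 2 1}) = 1 / (2 * Real.sqrt 113)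
  set S := segment ℝ (pt 0 0 0 0) (pt 1 2 1 2) with hS
  set T := convexHull ℝ {pt 2 2 1 0, pt 0 1 0 2, pt 0 0 2 1} with hT
  -- the witness points
  have hp : pt (273/452) (273/226) (273/452) (273/226) ∈ S := by
    refine ⟨179/452, 273/452, by norm_num, by norm_num, by norm_num, ?_⟩
    rw [smul_add_pt]; norm_num
  have hAm : pt 2 2 1 0 ∈ T := subset_convexHull ℝ _ (by simp)
  have hBm : pt 0 1 0 2 ∈ T := subset_convexHull ℝ _ (by simp)
  have hCm : pt 0 0 2 1 ∈ T := subset_convexHull ℝ _ (by simp)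
  have hq : pt (72/113) (533/452) (135/226) (553/452) ∈ T := by
    have hm : pt 0 (245/308) (126/308) (553/308) ∈ T := by
      have := (convex_convexHull ℝ _) hBm hCm
        (by norm_num : (0:ℝ) ≤ 245/308) (by norm_num : (0:ℝ) ≤ 63/308) (by norm_num)
      rwa [smul_add_pt, show ((245:ℝ)/308*0+63/308*0) = 0 by norm_num,
        show ((245:ℝ)/308*1+63/308*0) = 245/308 by norm_num,
        show ((245:ℝ)/308*0+63/308*2) = 126/308 by norm_num,
        show ((245:ℝ)/308*2+63/308*1) = 553/308 by norm_num] at this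
    have := (convex_convexHull ℝ _) hAm hm
      (by norm_num : (0:ℝ) ≤ 144/452) (by norm_num : (0:ℝ) ≤ 308/452) (by norm_num)
    rwa [smul_add_pt, show ((144:ℝ)/452*2+308/452*0) = 72/113 by norm_num,
      show ((144:ℝ)/452*2+308/452*(245/308)) = 533/452 by norm_num,
      show ((144:ℝ)/452*1+308/452*(126/308)) = 135/226 by norm_num,
      show ((144:ℝ)/452*0+308/452*(553/308)) = 553/452 by norm_num] at this
  -- separating vector
  set w : E4 := pt 15 (-13) (-3) 7 with hw_def
  have hw : ‖w‖ = 2 * Real.sqrt 113 := by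
    have h1 : ‖w‖ = Real.sqrt 452 := by
      rw [← Real.sqrt_sq (norm_nonneg w)]
      congr 1
      rw [sq, ← real_inner_self_eq_norm_mul_norm, hw_def, inner_pt]; norm_num
    rw [h1, show (452:ℝ) = 2^2*113 by norm_num,
      Real.sqrt_mul (by positivity), Real.sqrt_sq (by norm_num)]
  have key : ∀ p ∈ S, ∀ q ∈ T, 1/(2*Real.sqrt 113) ≤ dist p q := by
    intro p hpS q hqT
    have hip : (inner ℝ w p : ℝ) = 0 := by
      obtain ⟨a, b, ha, hb, hab, rfl⟩ := hpS
      rw [inner_add_right, real_inner_smul_right, real_inner_smul_right,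
        hw_def, inner_pt, inner_pt]
      ring
    have hiq : (inner ℝ w q : ℝ) = 1 := by
      have hconv : Convex ℝ {x : E4 | (inner ℝ w x : ℝ) = 1} := by
        intro x hx y hy a b _ _ hab
        simp only [Set.mem_setOf_eq] at hx hy ⊢
        rw [inner_add_right, real_inner_smul_right, real_inner_smul_right, hx, hy]
        simpa using hab
      refine convexHull_min ?_ hconv hqT
      rintro x (rfl | rfl | rfl) <;>
        · simp only [Set.mem_setOf_eq, hw_def, inner_pt]; norm_num
    have h1 : (1:ℝ) ≤ ‖w‖ * ‖q - p‖ := by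
      have h2 := real_inner_le_norm w (q - p)
      rw [inner_sub_right, hiq, hip] at h2; linarith
    rw [hw, norm_sub_rev, ← dist_eq_norm] at h1
    rw [div_le_iff₀ (by positivity)]
    linarith
  have hd := dist_pq
  have hmem : 1/(2*Real.sqrt 113) ∈ Set.image2 dist S T :=
    ⟨_, hp, _, hq, hd⟩
  refine le_antisymm (csInf_le ⟨1/(2*Real.sqrt 113), ?_⟩ hmem)
    (le_csInf ⟨_, hmem⟩ ?_) <;>
  · rintro x ⟨p, hpS, q, hqT, rfl⟩
    exact key p hpS q hqT
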